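/- If the graph G(M) has no nontrivial 4-cycles, then every graph automorphism of G(M) fixing the vertex 0 is a group automorphism of Z^n/M Z^n. -/

import Mathlib

open Matrix Polynomial

abbrev Zq {n : ℕ} (M : Matrix (Fin n) (Fin n) ℤ) : Type :=
  (Fin n → ℤ) ⧸ LinearMap.range M.mulVecLin

def qk {n : ℕ} (M : Matrix (Fin n) (Fin n) ℤ) (v : Fin n → ℤ) : Zq M :=
  Submodule.Quotient.mk v

/-- The Cayley graph `G(M)` on `ℤⁿ/Mℤⁿ` with connection set `±B_n`. -/
def GM {n : ℕ} (M : Matrix (Fin n) (Fin n) ℤ) : SimpleGraph (Zq M) :=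
  SimpleGraph.fromRel fun v w => ∃ i : Fin n, w - v = qk M (Pi.single i 1)

/-- The connection set `±B_n` inside the quotient group. -/
def genSet {n : ℕ} (M : Matrix (Fin n) (Fin n) ℤ) : Set (Zq M) :=
  {x | ∃ i : Fin n, x = qk M (Pi.single i 1) ∨ x = -qk M (Pi.single i 1)}

def NoNontrivial4Cycles {n : ℕ} (M : Matrix (Fin n) (Fin n) ℤ) : Prop :=
  ∀ a b c d : Zq M, a ∈ genSet M → b ∈ genSet M → c ∈ genSet M → d ∈ genSet M →
    a + b + c + d = 0 → a = -b ∨ a = -c ∨ a = -d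

def IsSignedPerm {n : ℕ} (P : Matrix (Fin n) (Fin n) ℤ) : Prop :=
  ∃ (σ : Equiv.Perm (Fin n)) (ε : Fin n → ℤ), (∀ i, ε i = 1 ∨ ε i = -1) ∧
    ∀ i j, P i j = if i = σ j then ε j else 0

def SimilarInt {n : ℕ} (A B : Matrix (Fin n) (Fin n) ℤ) : Prop :=
  ∃ U : Matrix (Fin n) (Fin n) ℤ, IsUnit U.det ∧ A * U = U * B

namespace Stmt8Aux

variable {n : ℕ} {M : Matrix (Fin n) (Fin n) ℤ}

lemma neg_mem_genSet {x : Zq M} (hx : x ∈ genSet M) : -x ∈ genSet M := by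
  obtain ⟨i, hi | hi⟩ := hx
  · exact ⟨i, Or.inr (by rw [hi])⟩
  · exact ⟨i, Or.inl (by rw [hi, neg_neg])⟩

lemma adj_iff {v w : Zq M} : (GM M).Adj v w ↔ v ≠ w ∧ (w - v) ∈ genSet M := by
  rw [GM, SimpleGraph.fromRel_adj]
  constructor
  · rintro ⟨hne, ⟨i, hi⟩ | ⟨i, hi⟩⟩
    · exact ⟨hne, i, Or.inl hi⟩
    · refine ⟨hne, i, Or.inr ?_⟩
      rw [← hi]; abel
  · rintro ⟨hne, i, hi | hi⟩
    · exact ⟨hne, Or.inl ⟨i, hi⟩⟩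
    · refine ⟨hne, Or.inr ⟨i, ?_⟩⟩
      rw [← neg_sub, hi, neg_neg]

lemma adj_add {x s : Zq M} (hs : s ∈ genSet M) (h0 : s ≠ 0) :
    (GM M).Adj x (x + s) := by
  refine adj_iff.mpr ⟨?_, by simpa using hs⟩
  intro hx
  exact h0 (by simpa using (left_eq_add.mp hx))

variable (f : GM M ≃g GM M)

lemma f_adj {x y : Zq M} (hxy : (GM M).Adj x y) : (GM M).Adj (f x) (f y) :=
  f.map_adj_iff.mpr hxy

lemma edge_diff {x s : Zq M} (hs : s ∈ genSet M) (h0 : s ≠ 0) :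
    f (x + s) - f x ∈ genSet M ∧ f (x + s) ≠ f x := by
  have := adj_iff.mp (f_adj f (adj_add (x := x) hs h0))
  exact ⟨this.2, fun hc => this.1 hc.symm⟩

/-- Unique common neighbour of `u` and `u + a + a` when `a + a ≠ 0`. -/
lemma unique_cn (h : NoNontrivial4Cycles M) {u a z : Zq M} (ha : a ∈ genSet M)
    (h2 : a + a ≠ 0) (hz1 : (GM M).Adj u z) (hz2 : (GM M).Adj z (u + a + a)) :
    z = u + a := by
  obtain ⟨hne1, hc⟩ := adj_iff.mp hz1
  obtain ⟨hne2, hd⟩ := adj_iff.mp hz2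
  have := h (z - u) (u + a + a - z) (-a) (-a) hc hd (neg_mem_genSet ha)
      (neg_mem_genSet ha) (by abel)
  rcases this with h' | h' | h'
  · exfalso
    rw [neg_sub] at h'
    have h1 : u = u + a + a := sub_right_inj.mp h'
    exact h2 (left_eq_add.mp (h1.trans (add_assoc u a a)))
  · rw [neg_neg] at h'
    exact sub_eq_iff_eq_add'.mp h'
  · rw [neg_neg] at h'
    exact sub_eq_iff_eq_add'.mp h'

lemma doubling (h : NoNontrivial4Cycles M) {x s : Zq M} (hs : s ∈ genSet M)
    (h0 : s ≠ 0) (h2 : s + s ≠ 0) :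
    f (x + s + s) - f (x + s) = f (x + s) - f x := by
  obtain ⟨haS, haNe⟩ := edge_diff f (x := x) hs h0
  obtain ⟨hbS, hbNe⟩ := edge_diff f (x := x + s) hs h0
  set a : Zq M := f (x + s) - f x with hadef
  set b : Zq M := f (x + s + s) - f (x + s) with hbdef
  have hfa : f (x + s) = f x + a := by rw [hadef]; abel
  have hfb : f (x + s + s) = f x + a + b := by rw [hbdef, hfa]; abel
  have haNe0 : a ≠ 0 := fun hc => haNe (by rw [sub_eq_zero] at hc; exact hc)
  have hbNe0 : b ≠ 0 := fun hc => hbNe (by rw [sub_eq_zero] at hc; exact hc)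
  -- z := f x + b is a common neighbour of f x and f (x+s+s)
  have hz1 : (GM M).Adj (f x) (f x + b) := adj_add hbS hbNe0
  have hz2 : (GM M).Adj (f x + b) (f (x + s + s)) := by
    rw [hfb]
    refine adj_iff.mpr ⟨?_, ?_⟩
    · intro hc
      have h1 : b = a + b := add_left_cancel (by rw [hc, add_assoc] :
        f x + b = f x + (a + b))
      exact haNe0 (right_eq_add.mp h1)
    · have he : f x + a + b - (f x + b) = a := by abel
      rw [he]; exact haS
  -- pull back via f.symm
  have hw1 : (GM M).Adj x (f.symm (f x + b)) := by
    have h1 := f.symm.map_adj_iff.mpr hz1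
    rwa [f.symm_apply_apply] at h1
  have hw2 : (GM M).Adj (f.symm (f x + b)) (x + s + s) := by
    have h1 := f.symm.map_adj_iff.mpr hz2
    rwa [f.symm_apply_apply] at h1
  have hu := unique_cn h hs h2 hw1 hw2
  have hz : f x + b = f (x + s) := by
    rw [← hu, f.apply_symm_apply]
  rw [hfa] at hz
  exact add_left_cancel hz

lemma invol (h : NoNontrivial4Cycles M) {x s : Zq M} (hs : s ∈ genSet M)
    (h0 : s ≠ 0) (h2 : s + s = 0) :
    (f (x + s) - f x) + (f (x + s) - f x) = 0 := by
  by_contra hne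
  obtain ⟨haS, haNe⟩ := edge_diff f (x := x) hs h0
  set a : Zq M := f (x + s) - f x with hadef
  have hfa : f (x + s) = f x + a := by rw [hadef]; abel
  have haNe0 : a ≠ 0 := fun hc => haNe (by rw [sub_eq_zero] at hc; exact hc)
  set w : Zq M := f.symm (f x + a + a) with hwdef
  have hfw : f w = f x + a + a := by rw [hwdef, f.apply_symm_apply]
  have hwx : w ≠ x := by
    intro hc
    apply hne
    have h1 : f x = f x + (a + a) := by
      rw [← add_assoc, ← hfw, hc]
    exact left_eq_add.mp h1
  -- x + s is adjacent to w
  have hadj1 : (GM M).Adj (f (x + s)) (f w) := by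
    rw [hfa, hfw]
    refine adj_iff.mpr ⟨?_, ?_⟩
    · intro hc
      rw [add_assoc] at hc
      exact haNe0 (right_eq_add.mp (add_left_cancel hc))
    · have he : f x + a + a - (f x + a) = a := by abel
      rw [he]; exact haS
  have hadj1' : (GM M).Adj (x + s) w := f.map_adj_iff.mp hadj1
  obtain ⟨hne1, hbS⟩ := adj_iff.mp hadj1'
  set b : Zq M := w - (x + s) with hbdef
  have hbNe0 : b ≠ 0 := fun hc => hne1 ((sub_eq_zero.mp hc).symm)
  have hbs : b ≠ s := by
    intro hc
    apply hwx
    have : w = x + s + b := by rw [hbdef]; abel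
    rw [this, hc, add_assoc, h2, add_zero]
  -- x + b is a common neighbour of x and w
  have hA1 : (GM M).Adj x (x + b) := adj_add hbS hbNe0
  have hwb : w = x + s + b := by rw [hbdef]; abel
  have hA2 : (GM M).Adj (x + b) w := by
    refine adj_iff.mpr ⟨?_, ?_⟩
    · intro hc
      apply h0
      have h1 : x + b = x + s + b := hc.trans hwb
      exact left_eq_add.mp (add_right_cancel h1)
    · have h1 : w - (x + b) = s := by rw [hwb]; abel
      rw [h1]; exact hs
  -- map to the image side and use uniqueness
  have hI1 : (GM M).Adj (f x) (f (x + b)) := f_adj f hA1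
  have hI2 : (GM M).Adj (f (x + b)) (f x + a + a) := by
    have := f_adj f hA2
    rwa [hfw] at this
  have := unique_cn h haS hne hI1 hI2
  rw [← hfa] at this
  exact hbs (add_left_cancel (f.injective this : x + b = x + s))

lemma step (h : NoNontrivial4Cycles M) {s t : Zq M} (hs : s ∈ genSet M)
    (ht : t ∈ genSet M) (x : Zq M) :
    f (x + t + s) - f (x + t) = f (x + s) - f x := by
  rcases eq_or_ne s 0 with rfl | hs0
  · simp
  rcases eq_or_ne t 0 with rfl | ht0
  · simp
  rcases eq_or_ne t s with rfl | hts
  · -- t = s : doubling / involution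
    rcases eq_or_ne (t + t) 0 with h2 | h2
    · have hx : x + t + t = x := by rw [add_assoc, h2, add_zero]
      rw [hx]
      have := invol f h (x := x) ht ht0 h2
      have h' : f x - f (x + t) = -(f (x + t) - f x) := by abel
      rw [h']
      exact neg_eq_of_add_eq_zero_left this
    · exact doubling f h ht ht0 h2
  rcases eq_or_ne t (-s) with rfl | hts'
  · -- t = -s
    have h2 : s + s ≠ 0 := by
      intro hc
      apply hts
      rw [neg_eq_iff_add_eq_zero]
      exact hc
    have hd := doubling f h (x := x + -s) hs hs0 h2
    have hx : x + -s + s = x := by abel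
    rw [hx] at hd
    rw [hx, hd]
  · -- generic square
    obtain ⟨haS, _⟩ := edge_diff f (x := x) hs hs0
    obtain ⟨hbS, _⟩ := edge_diff f (x := x + s) ht ht0
    have hcAdj : (GM M).Adj (x + s + t) (x + t) := by
      refine adj_iff.mpr ⟨?_, ?_⟩
      · intro hc
        apply hs0
        have h1 : x + t + s = x + t + 0 := by
          rw [add_zero, add_right_comm, hc]
        exact add_left_cancel h1
      · have h1 : x + t - (x + s + t) = -s := by abel
        rw [h1]; exact neg_mem_genSet hs
    have hdAdj : (GM M).Adj (x + t) x := by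
      refine adj_iff.mpr ⟨?_, ?_⟩
      · intro hc
        exact ht0 (left_eq_add.mp hc.symm)
      · have h1 : x - (x + t) = -t := by abel
        rw [h1]; exact neg_mem_genSet ht
    obtain ⟨_, hcS⟩ := adj_iff.mp (f_adj f hcAdj)
    obtain ⟨_, hdS⟩ := adj_iff.mp (f_adj f hdAdj)
    have hsum : (f (x + s) - f x) + (f (x + s + t) - f (x + s)) +
        (f (x + t) - f (x + s + t)) + (f x - f (x + t)) = 0 := by abel
    rcases h _ _ _ _ haS hbS hcS hdS hsum with h' | h' | h'
    · exfalso
      apply hts'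
      have hfe : f x = f (x + s + t) := by
        have : f (x + s) - f x + (f (x + s + t) - f (x + s)) = 0 := by
          rw [h']; abel
        have : f (x + s + t) - f x = 0 := by rw [← this]; abel
        exact (sub_eq_zero.mp this).symm
      have := f.injective hfe
      have : x + 0 = x + (s + t) := by rw [add_zero, ← add_assoc, ← this]
      have := add_left_cancel this
      rw [eq_comm, ← neg_eq_iff_add_eq_zero] at this
      rw [← this]
    · have : f (x + s) - f x = f (x + s + t) - f (x + t) := by
        rw [h']; abel
      have hxx : x + t + s = x + s + t := by abel
      rw [hxx, ← this]
    · exfalso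
      apply hts
      have hfe : f (x + t) = f (x + s) := by
        have : f (x + s) - f x - (f (x + t) - f x) = 0 := by rw [h']; abel
        have : f (x + s) - f (x + t) = 0 := by rw [← this]; abel
        exact (sub_eq_zero.mp this).symm
      have := f.injective hfe
      exact add_left_cancel this

variable (hf : f 0 = 0)

/-- Reachability: any set containing `0` and closed under adding/subtracting
generators is everything. -/
lemma reach (A : Set (Zq M)) (h0 : (0 : Zq M) ∈ A)
    (hp : ∀ x ∈ A, ∀ i : Fin n, x + qk M (Pi.single i 1) ∈ A)
    (hm : ∀ x ∈ A, ∀ i : Fin n, x - qk M (Pi.single i 1) ∈ A) :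
    ∀ x : Zq M, x ∈ A := by
  have key : ∀ (c : ℤ) (x : Zq M), x ∈ A → ∀ i : Fin n,
      x + c • qk M (Pi.single i 1) ∈ A := by
    intro c
    induction c using Int.induction_on with
    | zero => intro x hx i; simpa using hx
    | succ k ih =>
      intro x hx i
      have := hp _ (ih x hx i) i
      have he : x + (k : ℤ) • qk M (Pi.single i 1) + qk M (Pi.single i 1)
          = x + ((k : ℤ) + 1) • qk M (Pi.single i 1) := by
        rw [add_smul, one_smul, add_assoc]
      rwa [he] at this
    | pred k ih =>
      intro x hx i
      have := hm _ (ih x hx i) i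
      have he : x + (-(k : ℤ)) • qk M (Pi.single i 1) - qk M (Pi.single i 1)
          = x + (-(k : ℤ) - 1) • qk M (Pi.single i 1) := by
        rw [sub_smul, one_smul]; abel
      rwa [he] at this
  intro x
  obtain ⟨v, rfl⟩ := Submodule.Quotient.mk_surjective _ x
  have hsum : ∀ s : Finset (Fin n),
      (Submodule.Quotient.mk (∑ i ∈ s, Pi.single i (v i)) :
        Zq M) ∈ A := by
    intro s
    induction s using Finset.induction_on with
    | empty => simpa using h0
    | insert a s' hni ih =>
      rw [Finset.sum_insert hni]
      have hone : (Pi.single a (v a) : Fin n → ℤ) = v a • Pi.single a 1 := by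
        rw [← Pi.single_smul, smul_eq_mul, mul_one]
      have : (Submodule.Quotient.mk (Pi.single a (v a) + ∑ i ∈ s', Pi.single i (v i)) :
          Zq M) = (Submodule.Quotient.mk (∑ i ∈ s', Pi.single i (v i)) : Zq M)
            + v a • qk M (Pi.single a 1) := by
        rw [Submodule.Quotient.mk_add, hone, Submodule.Quotient.mk_smul, add_comm]
        rfl
      rw [this]
      exact key _ _ ih a
  have := hsum Finset.univ
  rwa [Finset.univ_sum_single] at this

include hf in
lemma const_step (h : NoNontrivial4Cycles M) {s : Zq M} (hs : s ∈ genSet M)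
    (x : Zq M) : f (x + s) = f x + f s := by
  rcases eq_or_ne s 0 with rfl | hs0
  · simp [hf]
  suffices hA : ∀ y : Zq M, y ∈ {y : Zq M | f (y + s) - f y = f s} by
    have := hA x
    simp only [Set.mem_setOf_eq] at this
    rw [← this]; abel
  apply reach
  · simp [hf]
  · intro y hy i
    simp only [Set.mem_setOf_eq] at hy ⊢
    rw [← hy]
    exact step f h hs ⟨i, Or.inl rfl⟩ y
  · intro y hy i
    simp only [Set.mem_setOf_eq] at hy ⊢
    have h1 := step f h (x := y - qk M (Pi.single i 1)) hs ⟨i, Or.inl rfl⟩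
    rw [sub_add_cancel] at h1
    rw [← h1]; exact hy

end Stmt8Aux

theorem stmt_8 {n : ℕ} (M : Matrix (Fin n) (Fin n) ℤ)
    (h : NoNontrivial4Cycles M) (f : GM M ≃g GM M) (hf : f 0 = 0) :
    ∀ x y : Zq M, f (x + y) = f x + f y := by
  have main : ∀ y : Zq M, y ∈ {y : Zq M | ∀ x, f (x + y) = f x + f y} := by
    apply Stmt8Aux.reach
    · intro x; simp [hf]
    · intro y hy i
      simp only [Set.mem_setOf_eq] at hy ⊢
      have hgi : qk M (Pi.single i 1) ∈ genSet M := ⟨i, Or.inl rfl⟩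
      intro x
      rw [← add_assoc, Stmt8Aux.const_step f hf h hgi (x + y), hy x,
        Stmt8Aux.const_step f hf h hgi y, add_assoc]
    · intro y hy i
      simp only [Set.mem_setOf_eq] at hy ⊢
      have hgi : qk M (Pi.single i 1) ∈ genSet M := ⟨i, Or.inl rfl⟩
      intro x
      have h1 : f (x + (y - qk M (Pi.single i 1))) + f (qk M (Pi.single i 1))
          = f x + f y := by
        rw [← Stmt8Aux.const_step f hf h hgi (x + (y - qk M (Pi.single i 1)))]
        have : x + (y - qk M (Pi.single i 1)) + qk M (Pi.single i 1) = x + y := by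
          abel
        rw [this, hy x]
      have h2 : f (y - qk M (Pi.single i 1)) + f (qk M (Pi.single i 1)) = f y := by
        rw [← Stmt8Aux.const_step f hf h hgi (y - qk M (Pi.single i 1)),
          sub_add_cancel]
      calc f (x + (y - qk M (Pi.single i 1)))
          = f x + f y - f (qk M (Pi.single i 1)) := by
            rw [← h1]; abel
        _ = f x + f (y - qk M (Pi.single i 1)) := by rw [← h2]; abel
  intro x y
  exact main y x
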